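/- In a renewal where one node transmits after listening for duration l, the probability that a fixed non-transmitting node (among N i.i.d. Exp(λ) sleepers) receives the message is P(Y=1) = (1 − e^{−λl})(N−1)/N, and the probability it is the transmitter is P(Y=0) = 1/N; consequently P(Y=2) = 1 − 1/N − (1−e^{−λl})(N−1)/N = e^{−λl}(N−1)/N. -/

import Mathlib

open MeasureTheory Set Real ProbabilityTheory


lemma aux_meas_inf' {ι Ω : Type*} [MeasurableSpace Ω] (s : Finset ι) (hs : s.Nonempty)
    (f : ι → Ω → ℝ) (hf : ∀ i, Measurable (f i)) :
    Measurable fun ω => s.inf' hs fun i => f i ω := by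
  induction hs using Finset.Nonempty.cons_induction with
  | singleton i => simpa using hf i
  | cons i s hi hne ih =>
    have heq : (fun ω => (Finset.cons i s hi).inf' (Finset.cons_nonempty hi) fun i => f i ω)
        = fun ω => min (f i ω) (s.inf' hne fun i => f i ω) := by
      funext ω; exact Finset.inf'_cons hne (fun i => f i ω)
    rw [heq]
    exact (hf i).min ih

lemma aux_inf'_attach {ι : Type*} (s : Finset ι) (hs : s.Nonempty) (f : ι → ℝ) :
    s.attach.inf' (by simpa using hs) (fun i => f i.val) = s.inf' hs f := by
  apply le_antisymm
  · exact Finset.le_inf' _ _ fun b hb => Finset.inf'_le _ (Finset.mem_attach _ ⟨b, hb⟩)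
  · exact Finset.le_inf' _ _ fun i _ => Finset.inf'_le _ i.2

lemma aux_exp_singleton (r x : ℝ) : expMeasure r {x} = 0 := by
  show (volume.withDensity (gammaPDF 1 r)) {x} = 0
  rw [withDensity_apply _ (measurableSet_singleton x),
    Measure.restrict_eq_zero.mpr (measure_singleton x), lintegral_zero_measure]

lemma aux_exp_Iic {r : ℝ} (hr : 0 < r) (x : ℝ) :
    expMeasure r (Iic x) = ENNReal.ofReal (if 0 ≤ x then 1 - rexp (-(r * x)) else 0) := by
  haveI := isProbabilityMeasure_expMeasure hr
  rw [← ProbabilityTheory.ofReal_cdf (expMeasure r) x]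
  congr 1
  exact cdf_expMeasure_eq hr x

lemma aux_exp_Ioi {r : ℝ} (hr : 0 < r) {x : ℝ} (hx : 0 ≤ x) :
    expMeasure r (Ioi x) = ENNReal.ofReal (rexp (-(r * x))) := by
  haveI := isProbabilityMeasure_expMeasure hr
  have h1 : rexp (-(r * x)) ≤ 1 := by
    rw [Real.exp_le_one_iff]; nlinarith
  rw [← compl_Iic, measure_compl measurableSet_Iic (measure_ne_top _ _), measure_univ,
    aux_exp_Iic hr, if_pos hx, ← ENNReal.ofReal_one,
    ← ENNReal.ofReal_sub _ (by linarith)]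
  norm_num

lemma aux_exp_Ici {r : ℝ} (hr : 0 < r) {x : ℝ} (hx : 0 ≤ x) :
    expMeasure r (Ici x) = ENNReal.ofReal (rexp (-(r * x))) := by
  rw [← Set.Ioi_union_left, measure_union (Set.disjoint_singleton_right.mpr (by simp))
    (measurableSet_singleton x), aux_exp_singleton, add_zero, aux_exp_Ioi hr hx]

lemma aux_exp_Ioo {r : ℝ} (hr : 0 < r) {a b : ℝ} (ha : 0 ≤ a) (hab : a < b) :
    expMeasure r (Ioo a b) = ENNReal.ofReal (rexp (-(r * a)) - rexp (-(r * b))) := by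
  haveI := isProbabilityMeasure_expMeasure hr
  have hset : Ioo a b = Ioi a \ Ici b := by
    ext x; simp only [mem_Ioo, mem_diff, mem_Ioi, mem_Ici, not_le]
  have hsub : Ici b ⊆ Ioi a := fun x hx => lt_of_lt_of_le hab hx
  rw [hset, measure_diff hsub measurableSet_Ici.nullMeasurableSet (measure_ne_top _ _),
    aux_exp_Ioi hr ha, aux_exp_Ici hr (le_trans ha hab.le),
    ← ENNReal.ofReal_sub _ (exp_pos _).le]


lemma aux_expint {b c : ℝ} (hb : 0 < b) (hc : 0 ≤ c) :
    ∫⁻ x, ENNReal.ofReal (rexp (-(c * x))) ∂(expMeasure b) = ENNReal.ofReal (b / (b + c)) := by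
  have hbc : 0 < b + c := by linarith
  have hfm : Measurable fun x : ℝ => ENNReal.ofReal (rexp (-(c * x))) :=
    (((measurable_id.const_mul c).neg).exp).ennreal_ofReal
  have hpdfm : Measurable (exponentialPDF b) := by
    have heq : exponentialPDF b = fun x => ENNReal.ofReal (if 0 ≤ x then b * rexp (-(b * x)) else 0) :=
      funext fun x => exponentialPDF_eq b x
    rw [heq]
    apply Measurable.ennreal_ofReal
    exact Measurable.ite (measurableSet_le measurable_const measurable_id)
      ((measurable_id.const_mul b).neg.exp.const_mul b) measurable_const
  have hmeq : expMeasure b = volume.withDensity (exponentialPDF b) := rfl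
  rw [hmeq, lintegral_withDensity_eq_lintegral_mul _ hpdfm hfm]
  have hpt : ∀ x : ℝ, (exponentialPDF b * fun x => ENNReal.ofReal (rexp (-(c * x)))) x
      = (Ici (0:ℝ)).indicator (fun x => ENNReal.ofReal (b * rexp (-((b + c) * x)))) x := by
    intro x
    rcases le_or_gt 0 x with hx | hx
    · rw [Pi.mul_apply, exponentialPDF_of_nonneg hx, Set.indicator_of_mem (mem_Ici.mpr hx),
        ← ENNReal.ofReal_mul (by positivity)]
      congr 1
      rw [mul_assoc, ← Real.exp_add]
      ring_nf
    · rw [Pi.mul_apply, exponentialPDF_of_neg hx, Set.indicator_of_notMem (fun h => absurd (mem_Ici.mp h) (not_le.mpr hx)),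
        zero_mul]
  rw [lintegral_congr hpt, lintegral_indicator measurableSet_Ici,
    setLIntegral_congr (Ioi_ae_eq_Ici (a := (0:ℝ))).symm]
  have hint : IntegrableOn (fun x => b * rexp (-((b + c) * x))) (Ioi (0:ℝ)) := by
    have h := (exp_neg_integrableOn_Ioi 0 hbc).const_mul b
    have heq2 : (fun x => b * rexp (-(b + c) * x)) = fun x => b * rexp (-((b + c) * x)) := by
      funext x; rw [neg_mul]
    rwa [heq2] at h
  rw [← ofReal_integral_eq_lintegral_ofReal hint
    (Filter.Eventually.of_forall fun x => by positivity)]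
  congr 1
  rw [MeasureTheory.integral_const_mul]
  have h2 : ∫ x in Ioi (0:ℝ), rexp (-((b + c) * x)) = (b + c)⁻¹ := by
    have := integral_comp_mul_left_Ioi (fun y => rexp (-y)) 0 hbc
    simp only [mul_zero, integral_exp_neg_Ioi, neg_zero, Real.exp_zero, smul_eq_mul,
      mul_one] at this
    exact this
  rw [h2, div_eq_mul_inv]


open MeasureTheory

theorem stmt_13 {Ω : Type*} [MeasurableSpace Ω] (μ : Measure Ω) [IsProbabilityMeasure μ]
    (N : ℕ) (hN : 2 ≤ N) (r l : ℝ) (hr : 0 < r) (hl : 0 < l)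
    (X : Fin N → Ω → ℝ) (hmeas : ∀ i, Measurable (X i))
    (hindep : ProbabilityTheory.iIndepFun X μ)
    (hmap : ∀ i, Measure.map (X i) μ = ProbabilityTheory.expMeasure r)
    (j : Fin N) :
    μ {ω | X j ω = ⨅ i, X i ω} = ENNReal.ofReal (1 / N) ∧
    μ {ω | X j ω ≠ (⨅ i, X i ω) ∧ X j ω < (⨅ i, X i ω) + l}
      = ENNReal.ofReal ((1 - Real.exp (-(r * l))) * (N - 1) / N) ∧
    μ {ω | X j ω ≠ (⨅ i, X i ω) ∧ ¬ X j ω < (⨅ i, X i ω) + l}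
      = ENNReal.ofReal (Real.exp (-(r * l)) * (N - 1) / N) := by
  classical
  haveI : Nonempty (Fin N) := ⟨j⟩
  haveI hPr := isProbabilityMeasure_expMeasure hr
  set k : ℝ := (N : ℝ) - 1 with hk_def
  have hN2 : (2:ℝ) ≤ (N:ℝ) := by exact_mod_cast hN
  have hk1 : (1:ℝ) ≤ k := by rw [hk_def]; linarith
  have hkpos : 0 < k := by linarith
  have hkr : 0 < k * r := mul_pos hkpos hr
  have hkN : k + 1 = (N:ℝ) := by rw [hk_def]; ring
  have hNne : (N:ℝ) ≠ 0 := by positivity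
  haveI hPrk := isProbabilityMeasure_expMeasure hkr
  set S : Finset (Fin N) := Finset.univ.erase j with hS_def
  have hjS : j ∉ S := Finset.notMem_erase j _
  have hS : S.Nonempty := by
    obtain ⟨i, hi⟩ := Fintype.exists_ne_of_one_lt_card (by simp; omega) j
    exact ⟨i, Finset.mem_erase.mpr ⟨hi, Finset.mem_univ i⟩⟩
  have hScard : S.card = N - 1 := by
    rw [hS_def, Finset.card_erase_of_mem (Finset.mem_univ j), Finset.card_univ, Fintype.card_fin]
  set M : Ω → ℝ := fun ω => S.inf' hS fun i => X i ω with hM_def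
  have hMmeas : Measurable M := aux_meas_inf' S hS X hmeas
  have hmin : ∀ ω, (⨅ i, X i ω) = min (X j ω) (M ω) := by
    intro ω
    apply le_antisymm
    · exact le_min (ciInf_le (Set.Finite.bddBelow (Set.finite_range _)) j)
        (Finset.le_inf' hS _ fun b _ => ciInf_le (Set.Finite.bddBelow (Set.finite_range _)) b)
    · refine le_ciInf fun i => ?_
      by_cases hij : i = j
      · subst hij; exact min_le_left _ _
      · exact (min_le_right _ _).trans
          (Finset.inf'_le _ (Finset.mem_erase.mpr ⟨hij, Finset.mem_univ i⟩))
  -- law of the minimum of the others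
  have hcast : ((N - 1 : ℕ) : ℝ) = k := by
    rw [hk_def, Nat.cast_sub (by omega : 1 ≤ N)]; norm_num
  have hMap_M : μ.map M = ProbabilityTheory.expMeasure (k * r) := by
    haveI : IsProbabilityMeasure (μ.map M) := Measure.isProbabilityMeasure_map hMmeas.aemeasurable
    apply Measure.ext_of_Iic
    intro t
    rw [Measure.map_apply hMmeas measurableSet_Iic, aux_exp_Iic hkr]
    rcases le_or_gt 0 t with ht | ht
    · rw [if_pos ht]
      have hcompl : (M ⁻¹' Iic t)ᶜ = ⋂ i ∈ S, X i ⁻¹' (Ioi t) := by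
        ext ω
        simp only [Set.mem_compl_iff, Set.mem_preimage, Set.mem_Iic, not_le, Set.mem_iInter,
          Set.mem_Ioi, hM_def]
        exact Finset.lt_inf'_iff _
      have hInter : μ ((M ⁻¹' Iic t)ᶜ) = ENNReal.ofReal (rexp (-(k * r * t))) := by
        rw [hcompl, hindep.meas_biInter (fun i _ => ⟨Ioi t, measurableSet_Ioi, rfl⟩)]
        have heach : ∀ i ∈ S, μ (X i ⁻¹' Ioi t) = ENNReal.ofReal (rexp (-(r * t))) := by
          intro i _
          rw [← Measure.map_apply (hmeas i) measurableSet_Ioi, hmap i, aux_exp_Ioi hr ht]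
        rw [Finset.prod_congr rfl heach, Finset.prod_const, hScard,
          ← ENNReal.ofReal_pow (exp_pos _).le, ← Real.exp_nat_mul]
        congr 2
        rw [hcast]; ring
      have hs_meas : MeasurableSet (M ⁻¹' Iic t) := hMmeas measurableSet_Iic
      calc μ (M ⁻¹' Iic t)
          = 1 - (1 - μ (M ⁻¹' Iic t)) :=
            (ENNReal.sub_sub_cancel ENNReal.one_ne_top prob_le_one).symm
        _ = 1 - ENNReal.ofReal (rexp (-(k * r * t))) := by
            rw [← prob_compl_eq_one_sub hs_meas, hInter]
        _ = ENNReal.ofReal (1 - rexp (-(k * r * t))) := by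
            rw [ENNReal.ofReal_sub _ (exp_pos _).le, ENNReal.ofReal_one]
    · rw [if_neg (not_le.mpr ht), ENNReal.ofReal_zero]
      have hnull : ∀ i : Fin N, μ (X i ⁻¹' Iic t) = 0 := fun i => by
        rw [← Measure.map_apply (hmeas i) measurableSet_Iic, hmap i, aux_exp_Iic hr,
          if_neg (not_le.mpr ht), ENNReal.ofReal_zero]
      have hsub : M ⁻¹' Iic t ⊆ ⋃ i, X i ⁻¹' Iic t := by
        intro ω hω
        have hω' : S.inf' hS (fun i => X i ω) ≤ t := hω
        obtain ⟨i, _, hle⟩ := (Finset.inf'_le_iff _).mp hω'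
        exact Set.mem_iUnion.mpr ⟨i, (hle : X i ω ≤ t)⟩
      exact measure_mono_null hsub (measure_iUnion_null hnull)
  -- independence of M and X j
  have hInd : ProbabilityTheory.IndepFun M (X j) μ := by
    have h := hindep.indepFun_finset S {j}
      (Finset.disjoint_singleton_right.mpr hjS) hmeas
    have hSa : S.attach.Nonempty := Finset.attach_nonempty_iff.mpr hS
    have hg : Measurable fun y : {x // x ∈ S} → ℝ =>
        S.attach.inf' hSa fun i => y i :=
      aux_meas_inf' (ι := {x // x ∈ S}) (Ω := {x // x ∈ S} → ℝ) S.attach hSa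
        (fun i y => y i) (fun i => measurable_pi_apply i)
    have he : Measurable fun y : {x // x ∈ ({j} : Finset (Fin N))} → ℝ =>
        y ⟨j, Finset.mem_singleton_self j⟩ := measurable_pi_apply _
    have h2 := h.comp hg he
    have hgeq : ((fun y : {x // x ∈ S} → ℝ => S.attach.inf' hSa fun i => y i) ∘
        (fun a (i : {x // x ∈ S}) => X i a)) = M := by
      funext a
      exact aux_inf'_attach S hS (fun i => X i a)
    have heeq : ((fun y : {x // x ∈ ({j} : Finset (Fin N))} → ℝ =>
        y ⟨j, Finset.mem_singleton_self j⟩) ∘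
        (fun a (i : {x // x ∈ ({j} : Finset (Fin N))}) => X i a)) = X j := rfl
    rwa [hgeq, heeq] at h2
  have hpair_meas : Measurable fun ω => (M ω, X j ω) := hMmeas.prodMk (hmeas j)
  have hρ : μ.map (fun ω => (M ω, X j ω))
      = (ProbabilityTheory.expMeasure (k * r)).prod (ProbabilityTheory.expMeasure r) := by
    rw [(ProbabilityTheory.indepFun_iff_map_prod_eq_prod_map_map hMmeas.aemeasurable
      (hmeas j).aemeasurable).mp hInd, hMap_M, hmap j]
  have hae : ∀ᵐ v ∂(ProbabilityTheory.expMeasure (k * r)), 0 ≤ v := by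
    rw [ae_iff]
    have hset : {v : ℝ | ¬ 0 ≤ v} = Iio 0 := by ext v; simp [not_le]
    rw [hset]
    have h0 : ProbabilityTheory.expMeasure (k * r) (Iic 0) = 0 := by
      rw [aux_exp_Iic hkr]; simp
    exact measure_mono_null Iio_subset_Iic_self h0
  have hgmeas : Measurable fun v : ℝ => ENNReal.ofReal (rexp (-(r * v))) :=
    ((measurable_id.const_mul r).neg.exp).ennreal_ofReal
  have hI : ∫⁻ v, ENNReal.ofReal (rexp (-(r * v))) ∂(ProbabilityTheory.expMeasure (k * r))
      = ENNReal.ofReal (k / (k + 1)) := by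
    rw [aux_expint hkr hr.le]
    congr 1
    rw [div_eq_div_iff (by positivity) (by positivity)]
    ring
  have hfac : (0:ℝ) ≤ 1 - rexp (-(r * l)) := by
    have := Real.exp_le_one_iff.mpr (by nlinarith : -(r * l) ≤ 0)
    linarith
  refine ⟨?_, ?_, ?_⟩
  · -- P(Y = 0)
    have hB0 : MeasurableSet {p : ℝ × ℝ | p.2 ≤ p.1} :=
      measurableSet_le measurable_snd measurable_fst
    have hE0 : {ω | X j ω = ⨅ i, X i ω}
        = (fun ω => (M ω, X j ω)) ⁻¹' {p : ℝ × ℝ | p.2 ≤ p.1} := by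
      ext ω
      simp only [Set.mem_setOf_eq, Set.mem_preimage, hmin ω]
      constructor
      · intro h
        have h2 := min_le_right (X j ω) (M ω)
        rwa [← h] at h2
      · intro h
        exact (min_eq_left h).symm
    rw [hE0, ← Measure.map_apply hpair_meas hB0, hρ, Measure.prod_apply hB0]
    have hsl : ∀ v : ℝ, 0 ≤ v →
        ProbabilityTheory.expMeasure r (Prod.mk v ⁻¹' {p : ℝ × ℝ | p.2 ≤ p.1})
          = 1 - ENNReal.ofReal (rexp (-(r * v))) := by
      intro v hv
      have hslice : Prod.mk v ⁻¹' {p : ℝ × ℝ | p.2 ≤ p.1} = Iic v := rfl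
      rw [hslice, aux_exp_Iic hr, if_pos hv, ENNReal.ofReal_sub _ (exp_pos _).le,
        ENNReal.ofReal_one]
    rw [lintegral_congr_ae (hae.mono fun v hv => hsl v hv)]
    rw [lintegral_sub hgmeas (by rw [hI]; exact ENNReal.ofReal_ne_top)
      (hae.mono fun v hv => ENNReal.ofReal_le_one.mpr
        (Real.exp_le_one_iff.mpr (by nlinarith)))]
    rw [lintegral_one, measure_univ, hI, ← ENNReal.ofReal_one,
      ← ENNReal.ofReal_sub _ (by positivity)]
    congr 1
    rw [← hkN]
    field_simp
    ring
  · -- P(Y = 1)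
    have hB1 : MeasurableSet {p : ℝ × ℝ | p.1 < p.2 ∧ p.2 < p.1 + l} :=
      (measurableSet_lt measurable_fst measurable_snd).inter
        (measurableSet_lt measurable_snd (measurable_fst.add_const l))
    have hE1 : {ω | X j ω ≠ (⨅ i, X i ω) ∧ X j ω < (⨅ i, X i ω) + l}
        = (fun ω => (M ω, X j ω)) ⁻¹' {p : ℝ × ℝ | p.1 < p.2 ∧ p.2 < p.1 + l} := by
      ext ω
      simp only [Set.mem_setOf_eq, Set.mem_preimage, hmin ω, ne_eq]
      constructor
      · rintro ⟨hne, hlt⟩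
        have hvu : M ω < X j ω := lt_of_not_ge fun h => hne (min_eq_left h).symm
        rw [min_eq_right hvu.le] at hlt
        exact ⟨hvu, hlt⟩
      · rintro ⟨hvu, hlt⟩
        constructor
        · rw [min_eq_right hvu.le]; exact hvu.ne'
        · rw [min_eq_right hvu.le]; exact hlt
    rw [hE1, ← Measure.map_apply hpair_meas hB1, hρ, Measure.prod_apply hB1]
    have hsl : ∀ v : ℝ, 0 ≤ v →
        ProbabilityTheory.expMeasure r (Prod.mk v ⁻¹' {p : ℝ × ℝ | p.1 < p.2 ∧ p.2 < p.1 + l})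
          = ENNReal.ofReal (1 - rexp (-(r * l))) * ENNReal.ofReal (rexp (-(r * v))) := by
      intro v hv
      have hslice : Prod.mk v ⁻¹' {p : ℝ × ℝ | p.1 < p.2 ∧ p.2 < p.1 + l} = Ioo v (v + l) := rfl
      rw [hslice, aux_exp_Ioo hr hv (lt_add_of_pos_right v hl)]
      rw [← ENNReal.ofReal_mul hfac]
      congr 1
      have hexp : rexp (-(r * (v + l))) = rexp (-(r * v)) * rexp (-(r * l)) := by
        rw [← Real.exp_add]; ring_nf
      rw [hexp]; ring
    rw [lintegral_congr_ae (hae.mono fun v hv => hsl v hv), lintegral_const_mul _ hgmeas, hI,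
      ← ENNReal.ofReal_mul hfac]
    congr 1
    rw [← hkN]
    field_simp
  · -- P(Y = 2)
    have hB2 : MeasurableSet {p : ℝ × ℝ | p.1 < p.2 ∧ ¬ p.2 < p.1 + l} :=
      (measurableSet_lt measurable_fst measurable_snd).inter
        (measurableSet_lt measurable_snd (measurable_fst.add_const l)).compl
    have hE2 : {ω | X j ω ≠ (⨅ i, X i ω) ∧ ¬ X j ω < (⨅ i, X i ω) + l}
        = (fun ω => (M ω, X j ω)) ⁻¹' {p : ℝ × ℝ | p.1 < p.2 ∧ ¬ p.2 < p.1 + l} := by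
      ext ω
      simp only [Set.mem_setOf_eq, Set.mem_preimage, hmin ω, ne_eq]
      constructor
      · rintro ⟨hne, hlt⟩
        have hvu : M ω < X j ω := lt_of_not_ge fun h => hne (min_eq_left h).symm
        rw [min_eq_right hvu.le] at hlt
        exact ⟨hvu, hlt⟩
      · rintro ⟨hvu, hlt⟩
        constructor
        · rw [min_eq_right hvu.le]; exact hvu.ne'
        · rw [min_eq_right hvu.le]; exact hlt
    rw [hE2, ← Measure.map_apply hpair_meas hB2, hρ, Measure.prod_apply hB2]
    have hsl : ∀ v : ℝ, 0 ≤ v →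
        ProbabilityTheory.expMeasure r (Prod.mk v ⁻¹' {p : ℝ × ℝ | p.1 < p.2 ∧ ¬ p.2 < p.1 + l})
          = ENNReal.ofReal (rexp (-(r * l))) * ENNReal.ofReal (rexp (-(r * v))) := by
      intro v hv
      have hslice : Prod.mk v ⁻¹' {p : ℝ × ℝ | p.1 < p.2 ∧ ¬ p.2 < p.1 + l} = Ici (v + l) := by
        ext u
        simp only [Set.mem_preimage, Set.mem_setOf_eq, Set.mem_Ici, not_lt]
        constructor
        · rintro ⟨_, h2⟩; exact h2
        · intro h; exact ⟨lt_of_lt_of_le (by linarith) h, h⟩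
      rw [hslice, aux_exp_Ici hr (by linarith : (0:ℝ) ≤ v + l)]
      rw [← ENNReal.ofReal_mul (exp_pos _).le]
      congr 1
      rw [← Real.exp_add]; ring_nf
    rw [lintegral_congr_ae (hae.mono fun v hv => hsl v hv), lintegral_const_mul _ hgmeas, hI,
      ← ENNReal.ofReal_mul (exp_pos _).le]
    congr 1
    rw [← hkN]
    field_simp
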